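/- arXiv:1107.2575 — 6 statements merged into one kernel-verified Lean document; each statement's English description precedes it below -/
import Mathlib

section
/- Let 0 < α < 1 and let a be a real number. Then the function y : (0,∞) → ℝ defined by y(t) = Σ_{k=0}^∞ a^k t^{αk} / Γ(αk + 1) is differentiable at every t > 0, and its derivative is given by the term-wise differentiated series: y′(t) = Σ_{k=1}^∞ a^k · (αk) · t^{αk−1} / Γ(αk + 1). -/
open scoped Real


lemma gamma_interp {α : ℝ} (hα0 : 0 < α) (hα1 : α < 1) {x : ℝ} (hx : 0 < x) :
    x * Real.Gamma x ≤ Real.Gamma (x + α) * (x + α) ^ (1 - α) := by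
  have hxα : (0:ℝ) < x + α := by linarith
  have hxα1 : (0:ℝ) < x + α + 1 := by linarith
  have h := Real.convexOn_log_Gamma.2 (Set.mem_Ioi.2 hxα) (Set.mem_Ioi.2 hxα1)
    hα0.le (by linarith : (0:ℝ) ≤ 1 - α) (by ring)
  have harg : α • (x + α) + (1 - α) • (x + α + 1) = x + 1 := by
    simp only [smul_eq_mul]; ring
  rw [harg] at h
  simp only [Function.comp_apply, smul_eq_mul] at h
  have hG : Real.Gamma (x + 1) = x * Real.Gamma x := Real.Gamma_add_one hx.ne'
  have hG' : Real.Gamma (x + α + 1) = (x + α) * Real.Gamma (x + α) :=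
    Real.Gamma_add_one hxα.ne'
  have hGpos : 0 < Real.Gamma x := Real.Gamma_pos_of_pos hx
  have hGapos : 0 < Real.Gamma (x + α) := Real.Gamma_pos_of_pos hxα
  rw [hG, hG'] at h
  rw [Real.log_mul hx.ne' hGpos.ne', Real.log_mul hxα.ne' hGapos.ne'] at h
  have h2 : Real.log (x * Real.Gamma x)
      ≤ Real.log (Real.Gamma (x + α) * (x + α) ^ (1 - α)) := by
    rw [Real.log_mul hx.ne' hGpos.ne',
      Real.log_mul hGapos.ne' (by positivity : ((x + α) ^ (1 - α) : ℝ) ≠ 0),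
      Real.log_rpow hxα]
    linarith
  exact (Real.log_le_log_iff (by positivity) (by positivity)).1 h2

lemma aux_summable {α B : ℝ} (hα0 : 0 < α) (hα1 : α < 1) (hB : 0 ≤ B) :
    Summable (fun n : ℕ => ((n : ℝ) + 1) * B ^ n / Real.Gamma (α * n + 1)) := by
  apply summable_of_ratio_norm_eventually_le (r := 1/2) (by norm_num)
  have htend : Filter.Tendsto (fun n : ℕ => (α * n + 1 + α) ^ α) Filter.atTop Filter.atTop := by
    apply (tendsto_rpow_atTop hα0).comp
    apply Filter.tendsto_atTop_add_const_right
    apply Filter.tendsto_atTop_add_const_right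
    exact Filter.Tendsto.const_mul_atTop hα0 tendsto_natCast_atTop_atTop
  filter_upwards [htend.eventually_ge_atTop (4 * B * (1 + α))] with n hn
  have hΓ : 0 < Real.Gamma (α * n + 1) := Real.Gamma_pos_of_pos (by positivity)
  have hΓ' : 0 < Real.Gamma (α * n + 1 + α) := Real.Gamma_pos_of_pos (by positivity)
  have hx : (0:ℝ) < α * n + 1 := by positivity
  have hP : (0:ℝ) < α * n + 1 + α := by positivity
  have hPa : (0:ℝ) < (α * n + 1 + α) ^ α := Real.rpow_pos_of_pos hP _
  have hkey : (α * n + 1) * Real.Gamma (α * n + 1) * (α * n + 1 + α) ^ α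
      ≤ Real.Gamma (α * n + 1 + α) * (α * n + 1 + α) := by
    have h1 := gamma_interp hα0 hα1 hx
    calc (α * n + 1) * Real.Gamma (α * n + 1) * (α * n + 1 + α) ^ α
        ≤ Real.Gamma (α * n + 1 + α) * (α * n + 1 + α) ^ (1 - α) * (α * n + 1 + α) ^ α :=
          mul_le_mul_of_nonneg_right h1 hPa.le
      _ = Real.Gamma (α * n + 1 + α) * ((α * n + 1 + α) ^ (1 - α) * (α * n + 1 + α) ^ α) := by
          ring
      _ = Real.Gamma (α * n + 1 + α) * (α * n + 1 + α) := by
          rw [← Real.rpow_add hP]; norm_num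
  have hPle : α * n + 1 + α ≤ (1 + α) * (α * n + 1) := by nlinarith [mul_pos (mul_pos hα0 hα0) (by positivity : (0:ℝ) < (n:ℝ) + 1), sq_nonneg α]
  push_cast
  have harg : α * ((n:ℝ) + 1) + 1 = α * n + 1 + α := by ring
  rw [harg]
  have hv : (0:ℝ) ≤ ((n : ℝ) + 1) * B ^ n / Real.Gamma (α * n + 1) := by positivity
  have hv' : (0:ℝ) ≤ ((n:ℝ) + 1 + 1) * B ^ (n + 1) / Real.Gamma (α * n + 1 + α) := by positivity
  rw [Real.norm_eq_abs, Real.norm_eq_abs, abs_of_nonneg hv', abs_of_nonneg hv]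
  rcases hB.eq_or_lt with rfl | hBpos
  · rw [zero_pow (Nat.succ_ne_zero n), mul_zero, zero_div]
    positivity
  · rw [← mul_div_assoc, div_le_div_iff₀ hΓ' (by positivity)]
    rw [← mul_le_mul_iff_left₀ hP]
    have hBn : (0:ℝ) < B ^ n := by positivity
    calc ((n:ℝ) + 1 + 1) * B ^ (n + 1) * Real.Gamma (α * n + 1) * (α * n + 1 + α)
        = (((n:ℝ) + 2) * B * (α * n + 1 + α)) * (B ^ n * Real.Gamma (α * n + 1)) := by ring
      _ ≤ ((2 * ((n:ℝ) + 1)) * B * ((1 + α) * (α * n + 1))) * (B ^ n * Real.Gamma (α * n + 1)) := by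
          apply mul_le_mul_of_nonneg_right _ (by positivity)
          apply mul_le_mul _ hPle hP.le (by positivity)
          apply mul_le_mul_of_nonneg_right _ hB
          linarith
      _ = (1/2 * ((n:ℝ) + 1) * B ^ n * ((α * n + 1) * Real.Gamma (α * n + 1))) * (4 * B * (1 + α)) := by ring
      _ ≤ (1/2 * ((n:ℝ) + 1) * B ^ n * ((α * n + 1) * Real.Gamma (α * n + 1))) * (α * n + 1 + α) ^ α := by
          apply mul_le_mul_of_nonneg_left hn (by positivity)
      _ = 1/2 * ((n:ℝ) + 1) * B ^ n * ((α * n + 1) * Real.Gamma (α * n + 1) * (α * n + 1 + α) ^ α) := by ring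
      _ ≤ 1/2 * ((n:ℝ) + 1) * B ^ n * (Real.Gamma (α * n + 1 + α) * (α * n + 1 + α)) := by
          apply mul_le_mul_of_nonneg_left hkey (by positivity)
      _ = 1/2 * (((n:ℝ) + 1) * B ^ n) * Real.Gamma (α * n + 1 + α) * (α * n + 1 + α) := by ring

/-- For `0 < α < 1` and `a : ℝ`, the function `y(t) = ∑ a^k t^(αk)/Γ(αk+1)`
(`= E_{α,1}(a t^α)`) is differentiable at every `t > 0`, with derivative given by the
term-wise differentiated series `∑_{k=1}^∞ a^k (αk) t^(αk-1)/Γ(αk+1)`. -/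
theorem mittagLeffler_hasDerivAt (α a : ℝ) (hα0 : 0 < α) (hα1 : α < 1)
    (t : ℝ) (ht : 0 < t) :
    HasDerivAt (fun t' : ℝ => ∑' k : ℕ, a ^ k * t' ^ (α * k) / Real.Gamma (α * k + 1))
      (∑' k : ℕ, a ^ (k + 1) * (α * ((k : ℝ) + 1)) * t ^ (α * ((k : ℝ) + 1) - 1) /
        Real.Gamma (α * ((k : ℝ) + 1) + 1)) t := by
  set c : ℝ := t / 2 with hc
  set C : ℝ := t + 1 with hC
  have hcpos : 0 < c := by positivity
  have hCpos : 0 < C := by positivity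
  set B : ℝ := |a| * C ^ α with hB
  have hBnn : 0 ≤ B := by positivity
  set g : ℕ → ℝ → ℝ := fun n x => a ^ n * x ^ (α * n) / Real.Gamma (α * n + 1) with hg
  set g' : ℕ → ℝ → ℝ :=
    fun n x => a ^ n * (α * n) * x ^ (α * n - 1) / Real.Gamma (α * n + 1) with hg'
  set u : ℕ → ℝ := fun n => (α / c) * (((n : ℝ) + 1) * B ^ n / Real.Gamma (α * n + 1)) with hu
  have hΓpos : ∀ n : ℕ, 0 < Real.Gamma (α * n + 1) := fun n =>
    Real.Gamma_pos_of_pos (by positivity)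
  have hmem : t ∈ Set.Ioo c C := ⟨by simp [hc]; linarith, by simp [hC]⟩
  -- summability of the bound
  have hu_sum : Summable u := (aux_summable hα0 hα1 hBnn).mul_left _
  -- each term differentiable
  have hderiv : ∀ n : ℕ, ∀ y ∈ Set.Ioo c C, HasDerivAt (g n) (g' n y) y := by
    intro n y hy
    have hy0 : 0 < y := lt_trans hcpos hy.1
    have h := (Real.hasDerivAt_rpow_const (p := α * n) (Or.inl hy0.ne')).const_mul (a ^ n)
    have h2 := h.div_const (Real.Gamma (α * n + 1))
    convert h2 using 1
    · rfl
    · rfl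
    simp [hg']; ring
  -- bound on derivatives
  have hbound : ∀ n : ℕ, ∀ y ∈ Set.Ioo c C, ‖g' n y‖ ≤ u n := by
    intro n y hy
    have hy0 : 0 < y := lt_trans hcpos hy.1
    have hΓ := hΓpos n
    have hrp : y ^ (α * n - 1) ≤ C ^ (α * n) / c := by
      rw [Real.rpow_sub hy0, Real.rpow_one]
      apply div_le_div₀ (by positivity) _ hcpos hy.1.le
      exact Real.rpow_le_rpow hy0.le hy.2.le (by positivity)
    have hCB : |a| ^ n * C ^ (α * n) = B ^ n := by
      rw [hB, mul_pow, ← Real.rpow_natCast (C ^ α) n, ← Real.rpow_mul hCpos.le, mul_comm α n]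
    have h1 : ‖g' n y‖ = |a| ^ n * (α * n) * y ^ (α * n - 1) / Real.Gamma (α * n + 1) := by
      rw [hg']
      rw [Real.norm_eq_abs, abs_div, abs_of_pos hΓ, abs_mul, abs_mul, abs_pow,
        abs_of_nonneg (by positivity : (0:ℝ) ≤ α * n),
        abs_of_pos (Real.rpow_pos_of_pos hy0 _)]
    rw [h1, hu]
    rw [div_le_iff₀ hΓ] at *
    calc |a| ^ n * (α * n) * y ^ (α * n - 1)
        ≤ |a| ^ n * (α * ((n:ℝ) + 1)) * (C ^ (α * n) / c) := by
          apply mul_le_mul _ hrp (by positivity) (by positivity)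
          apply mul_le_mul_of_nonneg_left _ (by positivity)
          apply mul_le_mul_of_nonneg_left (by linarith) hα0.le
      _ = (α / c) * (((n:ℝ) + 1) * (|a| ^ n * C ^ (α * n))) := by ring
      _ = (α / c) * (((n:ℝ) + 1) * B ^ n) := by rw [hCB]
      _ = α / c * (((n:ℝ) + 1) * B ^ n / Real.Gamma (α * n + 1)) * Real.Gamma (α * n + 1) := by
          field_simp
  -- summability at the point t
  have hg0 : Summable fun n => g n t := by
    apply Summable.of_norm_bounded ((aux_summable hα0 hα1
      (by positivity : (0:ℝ) ≤ |a| * t ^ α)))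
    intro n
    have hΓ := hΓpos n
    have heq : ‖g n t‖ = (|a| * t ^ α) ^ n / Real.Gamma (α * n + 1) := by
      rw [hg, Real.norm_eq_abs, abs_div, abs_of_pos hΓ, abs_mul, abs_pow,
        abs_of_pos (Real.rpow_pos_of_pos ht _), mul_pow,
        ← Real.rpow_natCast (t ^ α) n, ← Real.rpow_mul ht.le, mul_comm α n]
    rw [heq]
    gcongr
    nlinarith [pow_nonneg (by positivity : (0:ℝ) ≤ |a| * t ^ α) n]
  -- apply the term-by-term differentiation theorem
  have hmain : HasDerivAt (fun z => ∑' n, g n z) (∑' n, g' n t) t :=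
    hasDerivAt_tsum_of_isPreconnected hu_sum isOpen_Ioo
      (isPreconnected_Ioo) hderiv hbound hmem hg0 hmem
  have hsum' : Summable fun n => g' n t :=
    Summable.of_norm_bounded hu_sum (fun n => hbound n t hmem)
  have hzero : g' 0 t = 0 := by simp [hg']
  have hre : (∑' n, g' n t)
      = ∑' k : ℕ, a ^ (k + 1) * (α * ((k : ℝ) + 1)) * t ^ (α * ((k : ℝ) + 1) - 1) /
        Real.Gamma (α * ((k : ℝ) + 1) + 1) := by
    rw [Summable.tsum_eq_zero_add hsum', hzero, zero_add]
    apply tsum_congr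
    intro k
    rw [hg']
    push_cast
    ring_nf
  rw [← hre]
  exact hmain
end

section
/- Let 0 < α < 1, let a and y₀ be real numbers, and define y : [0,∞) → ℝ by y(t) = y₀ Σ_{k=0}^∞ a^k t^{αk} / Γ(αk + 1) for t > 0 and y(0) = y₀. Then y is continuous at 0 from the right, and for every t > 0 the Caputo fractional derivative of order α of y satisfies (1/Γ(1−α)) ∫_0^t y′(τ) (t−τ)^{−α} dτ = a · y(t). In other words, y(t) = y₀ E_{α,1}(a t^α) solves the initial value problem ᶜD^α y − a y = 0, y(0) = y₀. -/
open MeasureTheory intervalIntegral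


open Filter in
lemma caputo_summable_aux {α : ℝ} (hα : 0 < α) {C : ℝ} (hC : 0 ≤ C) :
    Summable (fun n : ℕ => C ^ n / Real.Gamma (α * n + 1)) := by
  have hD : (1:ℝ) ≤ max 1 (2*C) := le_max_left _ _
  set D := max 1 (2*C) with hDdef
  set E := D ^ (1/α) with hEdef
  have hE1 : (1:ℝ) ≤ E := Real.one_le_rpow hD (by positivity)
  have hE0 : (0:ℝ) < E := lt_of_lt_of_le one_pos hE1
  -- eventually E^(m+1) ≤ m!
  have h1 : ∀ᶠ m : ℕ in atTop, E ^ (m+1) ≤ (Nat.factorial m : ℝ) := by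
    have := (Real.summable_pow_div_factorial E).tendsto_atTop_zero
    have h2 := this.eventually_le_const (show (0:ℝ) < 1/E by positivity)
    filter_upwards [h2] with m hm
    have hfac : (0:ℝ) < (Nat.factorial m : ℝ) := by positivity
    rw [div_le_div_iff₀ (by positivity) (by positivity)] at hm
    calc E ^ (m+1) = E^m * E := by ring
      _ ≤ (Nat.factorial m : ℝ) := by nlinarith [pow_nonneg hE0.le m]
  have hfloor : Tendsto (fun n : ℕ => ⌊α * n⌋₊) atTop atTop := by
    exact tendsto_nat_floor_atTop.comp (Tendsto.const_mul_atTop hα tendsto_natCast_atTop_atTop)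
  have h2 : ∀ᶠ n : ℕ in atTop, (2:ℝ) ≤ α * n := by
    exact (Tendsto.const_mul_atTop hα (tendsto_natCast_atTop_atTop (R := ℝ))).eventually_ge_atTop 2
  -- main eventual bound
  have key : ∀ᶠ n : ℕ in atTop, C ^ n / Real.Gamma (α * n + 1) ≤ (1/2) ^ n := by
    filter_upwards [hfloor.eventually h1, h2] with n hfacn h2n
    set m := ⌊α * n⌋₊ with hm
    have hm2 : (2:ℕ) ≤ m := Nat.le_floor (by exact_mod_cast h2n)
    have hmle : (m : ℝ) ≤ α * n := Nat.floor_le (by positivity)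
    have hmge : α * n ≤ (m : ℝ) + 1 := le_of_lt (Nat.lt_floor_add_one _)
    -- Γ(αn+1) ≥ Γ(m+1) = m!
    have hGammaMono : (Nat.factorial m : ℝ) ≤ Real.Gamma (α * n + 1) := by
      rw [← Real.Gamma_nat_eq_factorial]
      rcases eq_or_lt_of_le (by linarith : ((m:ℝ)+1) ≤ α * n + 1) with h | h
      · rw [h]
      · refine le_of_lt (Real.Gamma_strictMonoOn_Ici ?_ ?_ ?_)
        · simp only [Set.mem_Ici]; push_cast; exact_mod_cast by exact_mod_cast le_trans (by norm_num) (by exact_mod_cast Nat.add_le_add_right hm2 1 : (3:ℕ) ≤ m+1)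
        · simp only [Set.mem_Ici]; linarith
        · push_cast at h ⊢; linarith
    -- D^n ≤ E^(m+1)
    have hDn : D ^ n ≤ E ^ (m+1) := by
      have : E ^ (m+1) = D ^ ((1/α) * (m+1)) := by
        rw [hEdef, ← Real.rpow_natCast (D ^ (1/α)) (m+1), ← Real.rpow_mul (by linarith)]
        push_cast; ring_nf
      rw [this, ← Real.rpow_natCast D n]
      apply Real.rpow_le_rpow_of_exponent_le hD
      rw [one_div, inv_mul_eq_div, le_div_iff₀ hα]
      push_cast; linarith
    have hCn : (2*C) ^ n ≤ Real.Gamma (α * n + 1) := by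
      calc (2*C)^n ≤ D^n := pow_le_pow_left₀ (by positivity) (le_max_right _ _) n
        _ ≤ E^(m+1) := hDn
        _ ≤ (Nat.factorial m : ℝ) := hfacn
        _ ≤ _ := hGammaMono
    have hG0 : 0 < Real.Gamma (α * n + 1) := Real.Gamma_pos_of_pos (by positivity)
    rw [div_le_iff₀ hG0]
    calc C ^ n = (1/2)^n * (2*C)^n := by rw [← mul_pow]; ring_nf
      _ ≤ (1/2)^n * Real.Gamma (α*n+1) := by
          exact mul_le_mul_of_nonneg_left hCn (by positivity)
  -- conclude
  apply summable_of_isBigO_nat (summable_geometric_of_lt_one (by norm_num) (by norm_num : (1/2:ℝ) < 1))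
  apply Asymptotics.IsBigO.of_bound 1
  filter_upwards [key] with n hn
  have hG0 : 0 < Real.Gamma (α * n + 1) := Real.Gamma_pos_of_pos (by positivity)
  simp only [Real.norm_eq_abs, one_mul]
  rw [abs_of_nonneg (by positivity), abs_of_nonneg (by positivity)]
  exact hn

open MeasureTheory intervalIntegral Complex in
lemma real_beta_eqOn {p q : ℝ} :
    Set.EqOn (fun x : ℝ => ((x ^ (p-1) * (1-x) ^ (q-1) : ℝ) : ℂ))
      (fun x : ℝ => (x:ℂ) ^ ((p:ℂ) - 1) * (1 - (x:ℂ)) ^ ((q:ℂ) - 1)) (Set.uIcc 0 1) := by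
  intro x hx
  rw [Set.uIcc_of_le (by norm_num : (0:ℝ) ≤ 1)] at hx
  have hx0 : 0 ≤ x := hx.1
  have hx1 : 0 ≤ 1 - x := by linarith [hx.2]
  simp only
  rw [Complex.ofReal_mul, Complex.ofReal_cpow hx0, Complex.ofReal_cpow hx1]
  push_cast
  ring_nf

open MeasureTheory intervalIntegral in
lemma real_beta_integrable {p q : ℝ} (hp : 0 < p) (hq : 0 < q) :
    IntervalIntegrable (fun x : ℝ => x ^ (p-1) * (1-x) ^ (q-1)) volume 0 1 := by
  have hC := Complex.betaIntegral_convergent (u := p) (v := q) (by simpa using hp) (by simpa using hq)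
  rw [intervalIntegrable_iff] at hC ⊢
  have := hC.re
  apply this.congr
  filter_upwards [ae_restrict_mem measurableSet_uIoc] with x hx
  have hx' : x ∈ Set.uIcc (0:ℝ) 1 := Set.uIoc_subset_uIcc hx
  have := real_beta_eqOn (p := p) (q := q) hx'
  simp only at this
  rw [RCLike.re_to_complex, ← this, Complex.ofReal_re]

open MeasureTheory intervalIntegral in
lemma real_beta_value {p q : ℝ} (hp : 0 < p) (hq : 0 < q) :
    ∫ x in (0:ℝ)..1, x ^ (p-1) * (1-x) ^ (q-1)
      = Real.Gamma p * Real.Gamma q / Real.Gamma (p+q) := by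
  have hG : Real.Gamma p * Real.Gamma q
      = Real.Gamma (p+q) * ∫ x in (0:ℝ)..1, x ^ (p-1) * (1-x) ^ (q-1) := by
    have hC := Complex.Gamma_mul_Gamma_eq_betaIntegral (s := p) (t := q)
      (by simpa using hp) (by simpa using hq)
    have hbeta : Complex.betaIntegral p q
        = ((∫ x in (0:ℝ)..1, x ^ (p-1) * (1-x) ^ (q-1) : ℝ) : ℂ) := by
      rw [Complex.betaIntegral, ← intervalIntegral.integral_ofReal]
      exact intervalIntegral.integral_congr real_beta_eqOn |>.symm
    rw [hbeta, ← Complex.ofReal_add p q, Complex.Gamma_ofReal, Complex.Gamma_ofReal,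
      Complex.Gamma_ofReal, ← Complex.ofReal_mul, ← Complex.ofReal_mul] at hC
    exact_mod_cast hC
  have hGpq : 0 < Real.Gamma (p+q) := Real.Gamma_pos_of_pos (by linarith)
  field_simp
  linarith [hG]
open MeasureTheory intervalIntegral

lemma scaled_eqOn {p q t : ℝ} (ht : 0 < t) :
    Set.EqOn (fun x : ℝ => (t*x) ^ (p-1) * (t - t*x) ^ (q-1))
      (fun x : ℝ => t ^ (p+q-2) * (x ^ (p-1) * (1-x) ^ (q-1))) (Set.uIcc 0 1) := by
  intro x hx
  rw [Set.uIcc_of_le (by norm_num : (0:ℝ) ≤ 1)] at hx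
  have hx0 : 0 ≤ x := hx.1
  have hx1 : 0 ≤ 1 - x := by linarith [hx.2]
  simp only
  have h1 : t - t*x = t * (1-x) := by ring
  rw [h1, Real.mul_rpow ht.le hx0, Real.mul_rpow ht.le hx1]
  rw [show p+q-2 = (p-1)+(q-1) by ring, Real.rpow_add ht]
  ring

lemma scaled_beta_integrable {p q t : ℝ} (hp : 0 < p) (hq : 0 < q) (ht : 0 < t)
    {f : ℝ → ℝ} (hf : Set.EqOn f (fun τ => τ ^ (p-1) * (t-τ) ^ (q-1)) (Set.uIcc 0 t)) :
    IntervalIntegrable f volume 0 t := by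
  have hg := (real_beta_integrable hp hq).comp_mul_left (c := t⁻¹)
  simp only [zero_div, one_div, inv_inv] at hg
  have hg2 := hg.const_mul (t ^ (p+q-2))
  rw [intervalIntegrable_iff] at hg2 ⊢
  apply hg2.congr
  filter_upwards [ae_restrict_mem measurableSet_uIoc] with τ hτ
  have hτ' : τ ∈ Set.uIcc (0:ℝ) t := Set.uIoc_subset_uIcc hτ
  have hτI : τ ∈ Set.Icc (0:ℝ) t := by rwa [Set.uIcc_of_le ht.le] at hτ'
  have hx : t⁻¹ * τ ∈ Set.uIcc (0:ℝ) 1 := by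
    rw [Set.uIcc_of_le (by norm_num : (0:ℝ) ≤ 1)]
    constructor
    · exact mul_nonneg (inv_nonneg.mpr ht.le) hτI.1
    · rw [inv_mul_le_iff₀ ht, mul_one]; exact hτI.2
  have := (scaled_eqOn (p := p) (q := q) ht hx).symm
  simp only at this
  rw [mul_comm (t ^ (p+q-2))] at this ⊢
  rw [this, mul_inv_cancel_left₀ ht.ne']
  exact (hf hτ').symm

lemma scaled_beta_value {p q t : ℝ} (hp : 0 < p) (hq : 0 < q) (ht : 0 < t) :
    ∫ τ in (0:ℝ)..t, τ ^ (p-1) * (t-τ) ^ (q-1)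
      = t ^ (p+q-1) * (Real.Gamma p * Real.Gamma q / Real.Gamma (p+q)) := by
  have h := intervalIntegral.integral_comp_mul_left
    (f := fun τ : ℝ => τ ^ (p-1) * (t-τ) ^ (q-1)) (a := 0) (b := 1) (c := t) ht.ne'
  simp only [mul_zero, mul_one] at h
  have h2 : ∫ x in (0:ℝ)..1, (t*x) ^ (p-1) * (t - t*x) ^ (q-1)
      = t ^ (p+q-2) * (Real.Gamma p * Real.Gamma q / Real.Gamma (p+q)) := by
    rw [intervalIntegral.integral_congr (scaled_eqOn ht),
      intervalIntegral.integral_const_mul, real_beta_value hp hq]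
  rw [h2] at h
  have : ∫ τ in (0:ℝ)..t, τ ^ (p-1) * (t-τ) ^ (q-1)
      = t * (t ^ (p+q-2) * (Real.Gamma p * Real.Gamma q / Real.Gamma (p+q))) := by
    rw [h, smul_eq_mul, ← mul_assoc, mul_inv_cancel₀ ht.ne', one_mul]
  rw [this, ← mul_assoc]
  congr 1
  rw [show p+q-1 = 1+(p+q-2) by ring, Real.rpow_add ht, Real.rpow_one]

lemma G_summable_norm {α : ℝ} (hα : 0 < α) (a : ℝ) {r : ℝ} (hr : 0 ≤ r) :
    Summable (fun k : ℕ => ‖a ^ k * r ^ (α * k) / Real.Gamma (α * k + 1)‖) := by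
  have key : ∀ k : ℕ, ‖a ^ k * r ^ (α * k) / Real.Gamma (α * k + 1)‖
      = (|a| * r ^ α) ^ k / Real.Gamma (α * k + 1) := by
    intro k
    have hG : 0 < Real.Gamma (α * k + 1) := Real.Gamma_pos_of_pos (by positivity)
    have hrk : r ^ (α * (k:ℝ)) = (r ^ α) ^ k := by
      rw [Real.rpow_mul hr, Real.rpow_natCast]
    rw [Real.norm_eq_abs, abs_div, abs_of_pos hG, abs_mul, abs_pow, hrk,
      abs_of_nonneg (by positivity : (0:ℝ) ≤ (r ^ α) ^ k), ← mul_pow]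
  exact (caputo_summable_aux hα (by positivity)).congr (fun k => (key k).symm)

lemma G_summable {α : ℝ} (hα : 0 < α) (a : ℝ) {r : ℝ} (hr : 0 ≤ r) :
    Summable (fun k : ℕ => a ^ k * r ^ (α * k) / Real.Gamma (α * k + 1)) :=
  (G_summable_norm hα a hr).of_norm

lemma dG_summable_norm {α : ℝ} (hα : 0 < α) {C : ℝ} (hC : 0 ≤ C) :
    Summable (fun k : ℕ => α * k * C ^ k / Real.Gamma (α * k + 1)) := by
  have hsum : Summable (fun k : ℕ => α * ((2*C) ^ k / Real.Gamma (α * k + 1))) :=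
    (caputo_summable_aux hα (by positivity)).mul_left α
  apply Summable.of_nonneg_of_le _ _ hsum
  · intro k
    have hG : 0 < Real.Gamma (α * (k:ℝ) + 1) := Real.Gamma_pos_of_pos (by positivity)
    positivity
  · intro k
    have hG : 0 < Real.Gamma (α * (k:ℝ) + 1) := Real.Gamma_pos_of_pos (by positivity)
    rw [mul_assoc, mul_div_assoc]
    apply mul_le_mul_of_nonneg_left _ hα.le
    apply div_le_div_of_nonneg_right _ hG.le
    calc (k:ℝ) * C ^ k ≤ (2:ℝ) ^ k * C ^ k := by
          apply mul_le_mul_of_nonneg_right _ (by positivity)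
          exact_mod_cast (Nat.lt_two_pow_self (n := k)).le
      _ = (2*C) ^ k := by rw [← mul_pow]

set_option maxHeartbeats 1000000 in
lemma G_hasDerivAt {α : ℝ} (hα : 0 < α) (a : ℝ) {τ : ℝ} (hτ : 0 < τ) :
    HasDerivAt (fun s : ℝ => ∑' k : ℕ, a ^ k * s ^ (α * k) / Real.Gamma (α * k + 1))
      (∑' k : ℕ, α * k * a ^ k * τ ^ (α * k - 1) / Real.Gamma (α * k + 1)) τ := by
  have hu : Summable (fun k : ℕ =>
      (2/τ) * (α * k * (|a| * (τ+1) ^ α) ^ k / Real.Gamma (α * k + 1))) :=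
    (dG_summable_norm hα (by positivity)).mul_left _
  apply hasDerivAt_tsum_of_isPreconnected hu isOpen_Ioo
    (convex_Ioo (τ/2) (τ+1)).isPreconnected
    (g' := fun (k : ℕ) (σ : ℝ) => α * k * a ^ k * σ ^ (α * k - 1) / Real.Gamma (α * k + 1))
    ?_ ?_ (show τ ∈ Set.Ioo (τ/2) (τ+1) by constructor <;> linarith)
    (G_summable hα a hτ.le)
    (show τ ∈ Set.Ioo (τ/2) (τ+1) by constructor <;> linarith)
  · intro k σ hσ
    have hσ0 : 0 < σ := lt_trans (by linarith) hσ.1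
    have h := ((Real.hasDerivAt_rpow_const (x := σ) (p := α*k)
      (Or.inl hσ0.ne')).const_mul (a^k)).div_const (Real.Gamma (α*k+1))
    convert h using 1
    · rfl
    ring
  · intro k σ hσ
    have hσ0 : 0 < σ := lt_trans (by linarith) hσ.1
    have hσ1 : σ < τ + 1 := hσ.2
    have hG : 0 < Real.Gamma (α*(k:ℝ)+1) := Real.Gamma_pos_of_pos (by positivity)
    have hCk : (|a| * (τ+1) ^ α) ^ k = |a| ^ k * (τ+1) ^ (α*(k:ℝ)) := by
      rw [mul_pow, ← Real.rpow_natCast ((τ+1) ^ α) k, ← Real.rpow_mul (by positivity)]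
    have hstep : σ ^ (α*(k:ℝ)-1) ≤ 2/τ * (τ+1) ^ (α*(k:ℝ)) := by
      rw [Real.rpow_sub hσ0, Real.rpow_one, div_le_iff₀ hσ0]
      have h1 : σ ^ (α*(k:ℝ)) ≤ (τ+1) ^ (α*(k:ℝ)) :=
        Real.rpow_le_rpow hσ0.le (by linarith) (by positivity)
      have h2 : (0:ℝ) ≤ (τ+1) ^ (α*(k:ℝ)) := by positivity
      rw [div_mul_eq_mul_div, div_mul_eq_mul_div, le_div_iff₀ hτ]
      nlinarith [hσ.1]
    rw [Real.norm_eq_abs, abs_div, abs_of_pos hG, abs_mul, abs_mul, abs_pow,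
      abs_of_nonneg (by positivity : (0:ℝ) ≤ α * (k:ℝ)),
      abs_of_nonneg (Real.rpow_nonneg hσ0.le _), hCk]
    rw [← mul_div_assoc]
    apply div_le_div_of_nonneg_right _ hG.le
    have hnn : (0:ℝ) ≤ α * (k:ℝ) * |a| ^ k := by positivity
    calc α * (k:ℝ) * |a| ^ k * σ ^ (α*(k:ℝ)-1)
        ≤ α * (k:ℝ) * |a| ^ k * (2/τ * (τ+1) ^ (α*(k:ℝ))) := by
          rw [show α * (k:ℝ) * |a| ^ k * σ ^ (α*(k:ℝ)-1)
              = (α * (k:ℝ) * |a| ^ k) * σ ^ (α*(k:ℝ)-1) by ring,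
            show α * (k:ℝ) * |a| ^ k * (2/τ * (τ+1) ^ (α*(k:ℝ)))
              = (α * (k:ℝ) * |a| ^ k) * (2/τ * (τ+1) ^ (α*(k:ℝ))) by ring]
          exact mul_le_mul_of_nonneg_left hstep hnn
      _ = 2/τ * (α * (k:ℝ) * (|a| ^ k * (τ+1) ^ (α*(k:ℝ)))) := by ring

open MeasureTheory intervalIntegral


set_option maxHeartbeats 2000000 in
/-- For `0 < α < 1`, the function `y(t) = y₀ E_{α,1}(a t^α)` (with `y(0) = y₀`) is
continuous at `0` from the right and solves the Caputo initial-value problem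
`ᶜD^α y - a y = 0`, `y(0) = y₀`: for every `t > 0`,
`(1/Γ(1-α)) ∫_0^t y'(τ) (t-τ)^(-α) dτ = a y(t)`. -/
theorem mittagLeffler_solves_caputo_ivp (α a y₀ : ℝ) (hα0 : 0 < α) (hα1 : α < 1)
    (y : ℝ → ℝ)
    (hy : ∀ t : ℝ, 0 < t →
      y t = y₀ * ∑' k : ℕ, a ^ k * t ^ (α * k) / Real.Gamma (α * k + 1))
    (hy0 : y 0 = y₀) :
    ContinuousWithinAt y (Set.Ici 0) 0 ∧
    ∀ t : ℝ, 0 < t →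
      (1 / Real.Gamma (1 - α)) *
          ∫ τ in (0 : ℝ)..t, deriv y τ * (t - τ) ^ (-α) = a * y t := by
  have hq : 0 < 1 - α := by linarith
  have hGq : 0 < Real.Gamma (1 - α) := Real.Gamma_pos_of_pos hq
  constructor
  · -- Continuity at 0 from the right
    rw [← continuousWithinAt_Ioi_iff_Ici]
    unfold ContinuousWithinAt
    rw [hy0, ← tendsto_sub_nhds_zero_iff]
    set b : ℕ → ℝ := fun k => |a| ^ (k+1) / Real.Gamma (α * (k+1) + 1) with hb
    have hbsum : Summable b := by
      have h0 : Summable (fun k : ℕ => |a| ^ (k+1) / Real.Gamma (α * ((k:ℝ)+1) + 1)) := by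
        have := (summable_nat_add_iff (f := fun k : ℕ =>
          |a| ^ k / Real.Gamma (α * k + 1)) 1).2 (caputo_summable_aux hα0 (abs_nonneg a))
        apply this.congr
        intro k; push_cast; ring_nf
      apply h0.congr
      intro k; rfl
    set S : ℝ := ∑' k : ℕ, b k with hS
    have hbound : ∀ᶠ x in nhdsWithin (0:ℝ) (Set.Ioi 0),
        ‖y x - y₀‖ ≤ (|y₀| * S) * x ^ α := by
      filter_upwards [Ioo_mem_nhdsGT_of_mem (Set.mem_Ico.2 ⟨le_refl (0:ℝ), one_pos⟩)]
        with x hx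
      have hx0 : 0 < x := hx.1
      have hx1 : x < 1 := hx.2
      have hsum := G_summable hα0 a hx0.le
      have hnormsum := G_summable_norm hα0 a hx0.le
      have hzero : a ^ (0:ℕ) * x ^ (α * (0:ℕ)) / Real.Gamma (α * (0:ℕ) + 1) = 1 := by
        simp [Real.Gamma_one]
      rw [hy x hx0, Summable.tsum_eq_zero_add hsum, hzero]
      push_cast
      have hGpos : ∀ k : ℕ, 0 < Real.Gamma (α * ((k:ℝ)+1) + 1) :=
        fun k => Real.Gamma_pos_of_pos (by positivity)
      have hterm : ∀ k : ℕ, ‖a ^ (k+1) * x ^ (α * ((k:ℕ)+1:ℝ)) / Real.Gamma (α * ((k:ℕ)+1:ℝ) + 1)‖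
          ≤ b k * x ^ α := by
        intro k
        have hG := hGpos k
        rw [Real.norm_eq_abs, abs_div, abs_of_pos hG, abs_mul, abs_pow,
          abs_of_nonneg (Real.rpow_nonneg hx0.le _)]
        rw [hb]
        have hxsplit : x ^ (α * ((k:ℝ)+1)) = x ^ α * x ^ (α * k) := by
          rw [← Real.rpow_add hx0]; ring_nf
        have hxle : x ^ (α * (k:ℝ)) ≤ 1 :=
          Real.rpow_le_one hx0.le hx1.le (by positivity)
        rw [hxsplit]
        rw [div_mul_eq_mul_div]
        apply div_le_div_of_nonneg_right _ hG.le
        calc |a| ^ (k+1) * (x ^ α * x ^ (α * (k:ℝ)))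
            = (|a| ^ (k+1) * x ^ (α * (k:ℝ))) * x ^ α := by ring
          _ ≤ (|a| ^ (k+1) * 1) * x ^ α := by
              apply mul_le_mul_of_nonneg_right _ (Real.rpow_nonneg hx0.le α)
              exact mul_le_mul_of_nonneg_left hxle (by positivity)
          _ = |a| ^ (k+1) * x ^ α := by ring
      have hsum1 : Summable (fun k : ℕ =>
          ‖a ^ (k+1) * x ^ (α * ((k:ℕ)+1:ℝ)) / Real.Gamma (α * ((k:ℕ)+1:ℝ) + 1)‖) := by
        have := (summable_nat_add_iff (f := fun k : ℕ =>
          ‖a ^ k * x ^ (α * k) / Real.Gamma (α * k + 1)‖) 1).2 hnormsum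
        apply this.congr
        intro k; push_cast; ring_nf
      have hnorm : ‖y₀ * (1 + ∑' k : ℕ, a ^ (k+1) * x ^ (α * ((k:ℕ)+1:ℝ))
            / Real.Gamma (α * ((k:ℕ)+1:ℝ) + 1)) - y₀‖
          ≤ |y₀| * ((∑' k : ℕ, b k * x ^ α)) := by
        have h1 : y₀ * (1 + ∑' k : ℕ, a ^ (k+1) * x ^ (α * ((k:ℕ)+1:ℝ))
            / Real.Gamma (α * ((k:ℕ)+1:ℝ) + 1)) - y₀
            = y₀ * ∑' k : ℕ, a ^ (k+1) * x ^ (α * ((k:ℕ)+1:ℝ))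
            / Real.Gamma (α * ((k:ℕ)+1:ℝ) + 1) := by ring
        rw [h1, norm_mul, Real.norm_eq_abs (y₀)]
        apply mul_le_mul_of_nonneg_left _ (abs_nonneg y₀)
        calc ‖∑' k : ℕ, a ^ (k+1) * x ^ (α * ((k:ℕ)+1:ℝ))
              / Real.Gamma (α * ((k:ℕ)+1:ℝ) + 1)‖
            ≤ ∑' k : ℕ, ‖a ^ (k+1) * x ^ (α * ((k:ℕ)+1:ℝ))
              / Real.Gamma (α * ((k:ℕ)+1:ℝ) + 1)‖ := norm_tsum_le_tsum_norm hsum1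
          _ ≤ ∑' k : ℕ, b k * x ^ α := by
              apply Summable.tsum_le_tsum hterm hsum1
              exact hbsum.mul_right _
      have hfin : (∑' k : ℕ, b k * x ^ α) = S * x ^ α := tsum_mul_right
      calc ‖y₀ * (1 + ∑' k : ℕ, a ^ (k+1) * x ^ (α * ((k:ℕ)+1:ℝ))
            / Real.Gamma (α * ((k:ℕ)+1:ℝ) + 1)) - y₀‖
          ≤ |y₀| * ((∑' k : ℕ, b k * x ^ α)) := hnorm
        _ = (|y₀| * S) * x ^ α := by rw [hfin]; ring
    apply squeeze_zero_norm' hbound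
    have h1 : Filter.Tendsto (fun x : ℝ => x ^ α) (nhdsWithin 0 (Set.Ioi 0)) (nhds 0) := by
      have := (Real.continuousAt_rpow_const 0 α (Or.inr hα0.le)).tendsto.mono_left
        (nhdsWithin_le_nhds (s := Set.Ioi (0:ℝ)))
      rwa [Real.zero_rpow hα0.ne'] at this
    have := h1.const_mul (|y₀| * S)
    simpa using this
  · -- The Caputo derivative identity
    intro t ht
    -- derivative of y on (0, ∞)
    have hderiv : ∀ τ : ℝ, 0 < τ → deriv y τ
        = ∑' k : ℕ, y₀ * (α * k * a ^ k * τ ^ (α * k - 1) / Real.Gamma (α * k + 1)) := by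
      intro τ hτ
      have hG := (G_hasDerivAt hα0 a hτ).const_mul y₀
      have heq : y =ᶠ[nhds τ]
          (fun s => y₀ * ∑' k : ℕ, a ^ k * s ^ (α * k) / Real.Gamma (α * k + 1)) := by
        filter_upwards [Ioi_mem_nhds hτ] with s hs
        exact hy s hs
      have hD := hG.congr_of_eventuallyEq heq
      rw [hD.deriv, ← tsum_mul_left]
    set c : ℕ → ℝ := fun k => y₀ * (α * k * a ^ k / Real.Gamma (α * k + 1)) with hc
    set F : ℕ → ℝ → ℝ := fun k τ => c k * (τ ^ (α * k - 1) * (t - τ) ^ (-α)) with hF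
    have hc0 : c 0 = 0 := by simp [hc]
    have hF0 : F 0 = fun _ : ℝ => (0:ℝ) := by
      funext τ; simp [hF, hc0]
    have hpoint : Set.EqOn (fun τ : ℝ => deriv y τ * (t - τ) ^ (-α))
        (fun τ : ℝ => ∑' k : ℕ, F k τ) (Set.Ioc 0 t) := by
      intro τ hτ
      simp only
      rw [hderiv τ hτ.1, ← tsum_mul_right]
      exact tsum_congr fun k => by simp only [hF, hc]; ring
    have hIoc : ∀ k : ℕ, 0 < (k:ℝ) → IntervalIntegrable
        (fun τ : ℝ => τ ^ (α * (k:ℝ) - 1) * (t - τ) ^ (-α)) volume 0 t := by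
      intro k hk
      apply scaled_beta_integrable (p := α * (k:ℝ)) (q := 1-α) (by positivity) hq ht
      intro τ _
      simp only
      rw [show (1:ℝ) - α - 1 = -α by ring]
    have hFint : ∀ k : ℕ, IntervalIntegrable (F k) volume 0 t := by
      intro k
      match k with
      | 0 => rw [hF0]; exact intervalIntegrable_const
      | (k+1) =>
        have hk : (0:ℝ) < ((k+1:ℕ):ℝ) := by exact_mod_cast Nat.succ_pos k
        exact (hIoc (k+1) hk).const_mul (c (k+1))
    have hInt : ∀ k : ℕ, Integrable (F k) (volume.restrict (Set.Ioc 0 t)) := fun k =>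
      (intervalIntegrable_iff_integrableOn_Ioc_of_le ht.le).mp (hFint k)
    have hJval : ∀ k : ℕ, ∫ τ in (0:ℝ)..t, F (k+1) τ
        = Real.Gamma (1-α) * (y₀ * a * (a ^ k * t ^ (α * k) / Real.Gamma (α * k + 1))) := by
      intro k
      have hp : 0 < α * ((k:ℝ)+1) := by positivity
      have hval := scaled_beta_value (p := α * ((k:ℝ)+1)) (q := 1-α) hp hq ht
      rw [show α*((k:ℝ)+1) + (1-α) - 1 = α * k by ring,
        show α*((k:ℝ)+1) + (1-α) = α * k + 1 by ring,
        show (1:ℝ) - α - 1 = -α by ring] at hval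
      simp only [hF]
      rw [intervalIntegral.integral_const_mul]
      push_cast
      rw [hval]
      have hGrec : Real.Gamma (α*((k:ℝ)+1) + 1) = α*((k:ℝ)+1) * Real.Gamma (α*((k:ℝ)+1)) :=
        Real.Gamma_add_one hp.ne'
      have hGp : 0 < Real.Gamma (α*((k:ℝ)+1)) := Real.Gamma_pos_of_pos hp
      have hGk : 0 < Real.Gamma (α*(k:ℝ) + 1) := Real.Gamma_pos_of_pos (by positivity)
      simp only [hc]
      push_cast
      rw [hGrec]
      field_simp
      ring
    have hInonneg : ∀ k : ℕ, 0 ≤ ∫ τ in (0:ℝ)..t, τ ^ (α * (k:ℝ) - 1) * (t - τ) ^ (-α) := by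
      intro k
      rw [intervalIntegral.integral_of_le ht.le]
      apply setIntegral_nonneg measurableSet_Ioc
      intro τ hτ
      exact mul_nonneg (Real.rpow_nonneg hτ.1.le _) (Real.rpow_nonneg (by linarith [hτ.2]) _)
    have hNorm : ∀ k : ℕ, ∫ τ in Set.Ioc (0:ℝ) t, ‖F k τ‖
        = |c k| * ∫ τ in (0:ℝ)..t, τ ^ (α * (k:ℝ) - 1) * (t - τ) ^ (-α) := by
      intro k
      rw [intervalIntegral.integral_of_le ht.le, ← MeasureTheory.integral_const_mul]
      apply setIntegral_congr_fun measurableSet_Ioc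
      intro τ hτ
      simp only [hF, norm_mul, Real.norm_eq_abs]
      rw [abs_of_nonneg (Real.rpow_nonneg hτ.1.le _),
        abs_of_nonneg (Real.rpow_nonneg (by linarith [hτ.2] : (0:ℝ) ≤ t - τ) _)]
    have hshift : ∀ k : ℕ, Real.Gamma (1-α) * |y₀ * a|
          * ‖a ^ k * t ^ (α * k) / Real.Gamma (α * k + 1)‖
        = ∫ τ in Set.Ioc (0:ℝ) t, ‖F (k+1) τ‖ := by
      intro k
      rw [hNorm (k+1)]
      have h1 : c (k+1) * (∫ τ in (0:ℝ)..t, τ ^ (α * (((k+1):ℕ):ℝ) - 1) * (t - τ) ^ (-α))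
          = Real.Gamma (1-α) * (y₀ * a * (a ^ k * t ^ (α * k) / Real.Gamma (α * k + 1))) := by
        rw [← intervalIntegral.integral_const_mul]
        exact hJval k
      rw [← abs_of_nonneg (hInonneg (k+1)), ← abs_mul, h1]
      simp only [Real.norm_eq_abs, abs_mul, abs_div, abs_of_nonneg hGq.le]
      ring
    have hNormSum : Summable (fun k : ℕ => ∫ τ in Set.Ioc (0:ℝ) t, ‖F k τ‖) := by
      apply (summable_nat_add_iff 1).mp
      exact ((G_summable_norm hα0 a ht.le).mul_left
        (Real.Gamma (1-α) * |y₀ * a|)).congr hshift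
    have hswap : ∫ τ in Set.Ioc (0:ℝ) t, (∑' k : ℕ, F k τ)
        = ∑' k : ℕ, ∫ τ in Set.Ioc (0:ℝ) t, F k τ :=
      (integral_tsum_of_summable_integral_norm hInt hNormSum).symm
    have hJsum : Summable (fun k : ℕ => ∫ τ in Set.Ioc (0:ℝ) t, F k τ) :=
      (hasSum_integral_of_summable_integral_norm hInt hNormSum).summable
    have hint_eq : ∫ τ in (0:ℝ)..t, deriv y τ * (t - τ) ^ (-α)
        = ∑' k : ℕ, ∫ τ in Set.Ioc (0:ℝ) t, F k τ := by
      rw [intervalIntegral.integral_of_le ht.le]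
      rw [setIntegral_congr_fun measurableSet_Ioc hpoint]
      exact hswap
    have hzero' : ∫ τ in Set.Ioc (0:ℝ) t, F 0 τ = 0 := by rw [hF0]; simp
    have hres : ∀ k : ℕ, ∫ τ in Set.Ioc (0:ℝ) t, F (k+1) τ
        = (Real.Gamma (1-α) * (y₀ * a)) * (a ^ k * t ^ (α * k) / Real.Gamma (α * k + 1)) := by
      intro k
      rw [← intervalIntegral.integral_of_le ht.le, hJval k]; ring
    rw [hint_eq, Summable.tsum_eq_zero_add hJsum, hzero', tsum_congr hres, tsum_mul_left, hy t ht]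
    field_simp
    ring
end

section
/- Let 0 < α < 1 and let f : ℝ → ℝ be continuously differentiable on [0,∞). Then for every t > 0, the Riemann–Liouville fractional integral of order α of the Caputo fractional derivative of order α of f recovers f up to its initial value: (1/Γ(α)) ∫_0^t (t−s)^{α−1} [ (1/Γ(1−α)) ∫_0^s f′(τ) (s−τ)^{−α} dτ ] ds = f(t) − f(0). -/
open MeasureTheory intervalIntegral

lemma real_betaIntegral {a b : ℝ} (ha : 0 < a) (hb : 0 < b) :
    ∫ u in (0:ℝ)..1, u ^ (a - 1) * (1 - u) ^ (b - 1) =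
      Real.Gamma a * Real.Gamma b / Real.Gamma (a + b) := by
  have h := Complex.Gamma_mul_Gamma_eq_betaIntegral (s := (a : ℂ)) (t := (b : ℂ))
    (by simpa using ha) (by simpa using hb)
  have hβ : Complex.betaIntegral a b =
      ((∫ u in (0:ℝ)..1, u ^ (a - 1) * (1 - u) ^ (b - 1) : ℝ) : ℂ) := by
    rw [Complex.betaIntegral, ← intervalIntegral.integral_ofReal]
    apply intervalIntegral.integral_congr
    intro x hx
    rw [Set.uIcc_of_le (by norm_num : (0:ℝ) ≤ 1)] at hx
    show (x:ℂ) ^ ((a:ℂ) - 1) * (1 - (x:ℂ)) ^ ((b:ℂ) - 1)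
        = ((x ^ (a - 1) * (1 - x) ^ (b - 1) : ℝ) : ℂ)
    rw [Complex.ofReal_mul, Complex.ofReal_cpow hx.1,
      Complex.ofReal_cpow (by linarith [hx.2] : (0:ℝ) ≤ 1 - x)]
    push_cast
    ring
  rw [hβ, ← Complex.ofReal_add, Complex.Gamma_ofReal, Complex.Gamma_ofReal,
    Complex.Gamma_ofReal, ← Complex.ofReal_mul, ← Complex.ofReal_mul] at h
  have h' := Complex.ofReal_injective h
  have hG : Real.Gamma (a + b) ≠ 0 := (Real.Gamma_pos_of_pos (by linarith)).ne'
  field_simp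
  linarith [h']

lemma kernel_integral {α : ℝ} (hα0 : 0 < α) (hα1 : α < 1) {τ t : ℝ} (hτt : τ < t) :
    ∫ s in τ..t, (t - s) ^ (α - 1) * (s - τ) ^ (-α) =
      Real.Gamma α * Real.Gamma (1 - α) := by
  have hbeta : ∫ u in (0:ℝ)..1, u ^ (-α) * (1 - u) ^ (α - 1) =
      Real.Gamma (1 - α) * Real.Gamma α := by
    have := real_betaIntegral (a := 1 - α) (b := α) (by linarith) hα0
    simpa [Real.Gamma_one] using this
  set c := t - τ with hc
  have hcpos : 0 < c := by simp [hc]; linarith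
  have hsub := intervalIntegral.integral_comp_mul_add
    (f := fun s => (t - s) ^ (α - 1) * (s - τ) ^ (-α)) (a := 0) (b := 1)
    (c := c) (d := τ) hcpos.ne'
  simp only [mul_zero, zero_add, mul_one] at hsub
  have hend : c + τ = t := by simp [hc]
  have hptwise : ∀ u ∈ Set.uIcc (0:ℝ) 1,
      (t - (c * u + τ)) ^ (α - 1) * ((c * u + τ) - τ) ^ (-α)
        = c ^ (-1 : ℝ) * (u ^ (-α) * (1 - u) ^ (α - 1)) := by
    intro u hu
    rw [Set.uIcc_of_le (by norm_num : (0:ℝ) ≤ 1)] at hu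
    have h1 : t - (c * u + τ) = c * (1 - u) := by simp [hc]; ring
    have h2 : (c * u + τ) - τ = c * u := by ring
    rw [h1, h2, Real.mul_rpow hcpos.le (by linarith [hu.2]),
      Real.mul_rpow hcpos.le hu.1]
    have : c ^ (α - 1) * c ^ (-α) = c ^ (-1 : ℝ) := by
      rw [← Real.rpow_add hcpos]; congr 1; ring
    calc c ^ (α - 1) * (1 - u) ^ (α - 1) * (c ^ (-α) * u ^ (-α))
        = (c ^ (α - 1) * c ^ (-α)) * ((1 - u) ^ (α - 1) * u ^ (-α)) := by ring
      _ = c ^ (-1 : ℝ) * (u ^ (-α) * (1 - u) ^ (α - 1)) := by rw [this]; ring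
  rw [intervalIntegral.integral_congr hptwise, intervalIntegral.integral_const_mul,
    hbeta] at hsub
  rw [hend] at hsub
  have hfin : Real.Gamma α * Real.Gamma (1 - α)
      = c * (c ^ (-1:ℝ) * (Real.Gamma (1 - α) * Real.Gamma α)) := by
    rw [Real.rpow_neg_one, ← mul_assoc, mul_inv_cancel₀ hcpos.ne', one_mul]; ring
  rw [hfin, hsub, smul_eq_mul, ← mul_assoc, mul_inv_cancel₀ hcpos.ne', one_mul]

/-- For `0 < α < 1` and `f` continuously differentiable on `[0,∞)`, the
Riemann–Liouville fractional integral of order `α` of the Caputo fractional derivative of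
order `α` of `f` recovers `f` up to its initial value:
`(1/Γ(α)) ∫_0^t (t-s)^(α-1) [(1/Γ(1-α)) ∫_0^s f'(τ)(s-τ)^(-α) dτ] ds = f(t) - f(0)`. -/
theorem riemannLiouville_integral_caputo_deriv (α : ℝ) (hα0 : 0 < α) (hα1 : α < 1)
    (f f' : ℝ → ℝ)
    (hderiv : ∀ x ∈ Set.Ici (0 : ℝ), HasDerivWithinAt f (f' x) (Set.Ici 0) x)
    (hcont : ContinuousOn f' (Set.Ici 0)) (t : ℝ) (ht : 0 < t) :
    (1 / Real.Gamma α) *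
        ∫ s in (0 : ℝ)..t, (t - s) ^ (α - 1) *
          ((1 / Real.Gamma (1 - α)) * ∫ τ in (0 : ℝ)..s, f' τ * (s - τ) ^ (-α)) =
      f t - f 0 := by
  have hα1' : (0:ℝ) < 1 - α := by linarith
  set g : ℝ → ℝ := fun x => f' (max x 0) with hg_def
  have hgcont : Continuous g :=
    hcont.comp_continuous (continuous_id.max continuous_const) (fun x => Set.mem_Ici.2 (le_max_right _ _))
  have hgf : ∀ x : ℝ, 0 ≤ x → g x = f' x := by
    intro x hx; simp only [hg_def]; rw [max_eq_left hx]
  obtain ⟨M, hM⟩ := (isCompact_Icc (a := (0:ℝ)) (b := t)).exists_bound_of_continuousOn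
    hgcont.continuousOn
  have hM0 : 0 ≤ M := le_trans (norm_nonneg _) (hM 0 (Set.left_mem_Icc.2 ht.le))
  -- FTC
  have hftc : ∫ τ in (0:ℝ)..t, g τ = f t - f 0 := by
    have h1 : ∫ τ in (0:ℝ)..t, g τ = ∫ τ in (0:ℝ)..t, f' τ := by
      apply intervalIntegral.integral_congr
      intro x hx
      rw [Set.uIcc_of_le ht.le] at hx
      exact hgf x hx.1
    rw [h1]
    apply intervalIntegral.integral_eq_sub_of_hasDeriv_right_of_le ht.le
    · intro x hx
      exact ((hderiv x hx.1).continuousWithinAt).mono (fun y hy => hy.1)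
    · intro x hx
      exact ((hderiv x hx.1.le).hasDerivAt (Ici_mem_nhds hx.1)).hasDerivWithinAt
    · apply ContinuousOn.intervalIntegrable
      apply hcont.mono
      rw [Set.uIcc_of_le ht.le]
      exact fun y hy => hy.1
  -- kernel integrability
  have hker : ∀ s : ℝ, IntervalIntegrable (fun τ : ℝ => (s - τ) ^ (-α)) volume 0 s := by
    intro s
    have h := (intervalIntegrable_rpow' (a := 0) (b := s) (r := -α)
      (by linarith)).comp_sub_left s
    simpa using h.symm
  have hgk : ∀ s : ℝ, IntervalIntegrable (fun τ => g τ * (s - τ) ^ (-α)) volume 0 s :=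
    fun s => (hker s).continuousOn_mul hgcont.continuousOn
  have hkerval : ∀ s : ℝ, 0 ≤ s →
      ∫ τ in (0:ℝ)..s, (s - τ) ^ (-α) = s ^ (1 - α) / (1 - α) := by
    intro s hs
    rw [intervalIntegral.integral_comp_sub_left (fun u : ℝ => u ^ (-α)) s]
    simp only [sub_self, sub_zero]
    rw [integral_rpow (Or.inl (by linarith))]
    rw [Real.zero_rpow (by linarith : -α + 1 ≠ 0)]
    rw [show -α + 1 = 1 - α by ring]
    ring
  set μ : Measure ℝ := volume.restrict (Set.Ioc 0 t) with hμ
  set F : ℝ × ℝ → ℝ := Set.indicator {q : ℝ × ℝ | q.2 < q.1}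
    (fun q => (t - q.1) ^ (α - 1) * (g q.2 * (q.1 - q.2) ^ (-α))) with hF
  have hFmeas : Measurable F := by
    apply Measurable.indicator
    · fun_prop
    · exact measurableSet_lt measurable_snd measurable_fst
  have hsec : ∀ s : ℝ, (fun τ => F (s, τ))
      = Set.indicator (Set.Iio s) (fun τ => (t - s) ^ (α - 1) * (g τ * (s - τ) ^ (-α))) := by
    intro s; funext τ
    simp only [hF, Set.indicator_apply, Set.mem_setOf_eq, Set.mem_Iio]
  have hsecτ : ∀ τ : ℝ, (fun s => F (s, τ))
      = Set.indicator (Set.Ioi τ) (fun s => (t - s) ^ (α - 1) * (g τ * (s - τ) ^ (-α))) := by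
    intro τ; funext s
    simp only [hF, Set.indicator_apply, Set.mem_setOf_eq, Set.mem_Ioi]
  have hτint : ∀ s ∈ Set.Ioc (0:ℝ) t, Integrable (fun τ => F (s, τ)) μ := by
    intro s hs
    rw [hsec s, hμ, integrable_indicator_iff measurableSet_Iio, IntegrableOn,
      Measure.restrict_restrict measurableSet_Iio]
    have hsub : Set.Iio s ∩ Set.Ioc 0 t ⊆ Set.Ioc 0 s :=
      fun τ hτ => ⟨hτ.2.1, hτ.1.le⟩
    refine Integrable.mono_measure ?_ (Measure.restrict_mono hsub le_rfl)
    exact (intervalIntegrable_iff_integrableOn_Ioc_of_le hs.1.le).1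
      ((hgk s).const_mul ((t - s) ^ (α - 1)))
  have hset1 : ∀ s ∈ Set.Ioc (0:ℝ) t, Set.Iio s ∩ Set.Ioc 0 t = Set.Ioo 0 s := by
    intro s hs
    ext τ
    simp only [Set.mem_inter_iff, Set.mem_Iio, Set.mem_Ioc, Set.mem_Ioo]
    constructor
    · rintro ⟨h1, h2, h3⟩; exact ⟨h2, h1⟩
    · rintro ⟨h1, h2⟩; exact ⟨h2, h1, le_trans h2.le hs.2⟩
  have hbound : ∀ s ∈ Set.Ioc (0:ℝ) t,
      (∫ τ, ‖F (s, τ)‖ ∂μ) ≤ (t - s) ^ (α - 1) * (M * (t ^ (1 - α) / (1 - α))) := by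
    intro s hs
    set h : ℝ → ℝ :=
      Set.indicator (Set.Iio s) (fun τ => (t - s) ^ (α - 1) * (M * (s - τ) ^ (-α))) with hh
    have hhint : Integrable h μ := by
      rw [hh, hμ, integrable_indicator_iff measurableSet_Iio, IntegrableOn,
        Measure.restrict_restrict measurableSet_Iio]
      have hsub : Set.Iio s ∩ Set.Ioc 0 t ⊆ Set.Ioc 0 s :=
        fun τ hτ => ⟨hτ.2.1, hτ.1.le⟩
      refine Integrable.mono_measure ?_ (Measure.restrict_mono hsub le_rfl)
      exact (intervalIntegrable_iff_integrableOn_Ioc_of_le hs.1.le).1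
        (((hker s).const_mul M).const_mul ((t - s) ^ (α - 1)))
    have hpt : ∀ᵐ τ ∂μ, ‖F (s, τ)‖ ≤ h τ := by
      rw [hμ]
      filter_upwards [ae_restrict_mem measurableSet_Ioc] with τ hτ
      rw [hh]
      have : F (s, τ) = Set.indicator (Set.Iio s)
          (fun τ => (t - s) ^ (α - 1) * (g τ * (s - τ) ^ (-α))) τ := congrFun (hsec s) τ
      rw [this]
      by_cases hτs : τ ∈ Set.Iio s
      · rw [Set.indicator_of_mem hτs, Set.indicator_of_mem hτs, Real.norm_eq_abs,
          abs_mul, abs_mul]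
        have hτs' : τ < s := Set.mem_Iio.1 hτs
        have h1 : 0 ≤ (t - s) ^ (α - 1) := Real.rpow_nonneg (by linarith [hs.2]) _
        have h2 : 0 ≤ (s - τ) ^ (-α) := Real.rpow_nonneg (by linarith [hτs']) _
        rw [abs_of_nonneg h1, abs_of_nonneg h2]
        have h3 : |g τ| ≤ M := hM τ ⟨hτ.1.le, hτ.2⟩
        gcongr
      · rw [Set.indicator_of_notMem hτs, Set.indicator_of_notMem hτs, norm_zero]
    calc ∫ τ, ‖F (s, τ)‖ ∂μ ≤ ∫ τ, h τ ∂μ :=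
          integral_mono_ae (hτint s hs).norm hhint hpt
      _ = (t - s) ^ (α - 1) * (M * (s ^ (1 - α) / (1 - α))) := by
          rw [hh, hμ, MeasureTheory.integral_indicator measurableSet_Iio,
            Measure.restrict_restrict measurableSet_Iio, hset1 s hs,
            ← integral_Ioc_eq_integral_Ioo, MeasureTheory.integral_const_mul,
            MeasureTheory.integral_const_mul,
            ← intervalIntegral.integral_of_le hs.1.le, hkerval s hs.1.le]
      _ ≤ (t - s) ^ (α - 1) * (M * (t ^ (1 - α) / (1 - α))) := by
          have h1 : 0 ≤ (t - s) ^ (α - 1) := Real.rpow_nonneg (by linarith [hs.2]) _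
          have h2 : s ^ (1 - α) ≤ t ^ (1 - α) :=
            Real.rpow_le_rpow hs.1.le hs.2 (by linarith)
          gcongr
  have hnormint : Integrable (fun s => ∫ τ, ‖F (s, τ)‖ ∂μ) μ := by
    have haesm : AEStronglyMeasurable (fun s => ∫ τ, ‖F (s, τ)‖ ∂μ) μ := by
      have := (hFmeas.aestronglyMeasurable.norm
        (μ := μ.prod μ)).integral_prod_right'
      exact this
    have hDint : Integrable
        (fun s => (t - s) ^ (α - 1) * (M * (t ^ (1 - α) / (1 - α)))) μ := by
      rw [hμ]
      have hD : IntervalIntegrable (fun s : ℝ => (t - s) ^ (α - 1)) volume 0 t := by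
        have h := (intervalIntegrable_rpow' (a := 0) (b := t) (r := α - 1)
          (by linarith)).comp_sub_left t
        simpa using h.symm
      exact (intervalIntegrable_iff_integrableOn_Ioc_of_le ht.le).1
        (hD.mul_const _)
    refine hDint.mono haesm ?_
    rw [hμ]
    filter_upwards [ae_restrict_mem measurableSet_Ioc] with s hs
    have h0 : (0:ℝ) ≤ ∫ τ, ‖F (s, τ)‖ ∂μ :=
      integral_nonneg fun τ => norm_nonneg _
    rw [Real.norm_eq_abs, Real.norm_eq_abs, abs_of_nonneg h0]
    exact le_trans (hbound s hs) (le_abs_self _)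
  have hFint : Integrable (Function.uncurry fun s τ => F (s, τ)) (μ.prod μ) := by
    have huncurry : (Function.uncurry fun s τ => F (s, τ)) = F := rfl
    rw [huncurry]
    refine (integrable_prod_iff hFmeas.aestronglyMeasurable).2 ⟨?_, hnormint⟩
    rw [hμ]
    filter_upwards [ae_restrict_mem measurableSet_Ioc] with s hs
    exact hτint s hs
  have hswap := MeasureTheory.integral_integral_swap hFint
  have hswap' : (∫ s, (∫ τ, F (s, τ) ∂μ) ∂μ) = ∫ τ, (∫ s, F (s, τ) ∂μ) ∂μ :=
    MeasureTheory.integral_integral_swap hFint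
  have hsec' : ∀ s τ : ℝ, F (s, τ) = Set.indicator (Set.Iio s)
      (fun τ => (t - s) ^ (α - 1) * (g τ * (s - τ) ^ (-α))) τ :=
    fun s τ => congrFun (hsec s) τ
  have hsecτ' : ∀ τ s : ℝ, F (s, τ) = Set.indicator (Set.Ioi τ)
      (fun s => (t - s) ^ (α - 1) * (g τ * (s - τ) ^ (-α))) s :=
    fun τ s => congrFun (hsecτ τ) s
  have hLHS : (∫ s in (0:ℝ)..t, (t - s) ^ (α - 1) *
        ∫ τ in (0:ℝ)..s, g τ * (s - τ) ^ (-α))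
      = ∫ s, (∫ τ, F (s, τ) ∂μ) ∂μ := by
    rw [intervalIntegral.integral_of_le ht.le, hμ]
    apply setIntegral_congr_fun measurableSet_Ioc
    intro s hs
    simp only [hsec']
    rw [MeasureTheory.integral_indicator measurableSet_Iio,
      Measure.restrict_restrict measurableSet_Iio, hset1 s hs,
      ← integral_Ioc_eq_integral_Ioo, MeasureTheory.integral_const_mul,
      ← intervalIntegral.integral_of_le hs.1.le]
  have hRHS : (∫ τ, (∫ s, F (s, τ) ∂μ) ∂μ)
      = (f t - f 0) * (Real.Gamma α * Real.Gamma (1 - α)) := by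
    have h1 : (∫ τ, (∫ s, F (s, τ) ∂μ) ∂μ)
        = ∫ τ in Set.Ioc (0:ℝ) t, g τ * (Real.Gamma α * Real.Gamma (1 - α)) ∂volume := by
      rw [hμ]
      apply setIntegral_congr_ae measurableSet_Ioc
      filter_upwards [compl_mem_ae_iff.2 (measure_singleton t)] with τ hτt hτmem
      have hτt' : τ ≠ t := hτt
      have hτ : τ ∈ Set.Ioo (0:ℝ) t := ⟨hτmem.1, lt_of_le_of_ne hτmem.2 hτt'⟩
      simp only [hsecτ']
      rw [MeasureTheory.integral_indicator measurableSet_Ioi,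
        Measure.restrict_restrict measurableSet_Ioi]
      have hset2 : Set.Ioi τ ∩ Set.Ioc 0 t = Set.Ioc τ t := by
        ext s
        simp only [Set.mem_inter_iff, Set.mem_Ioi, Set.mem_Ioc]
        constructor
        · rintro ⟨h1, h2, h3⟩; exact ⟨h1, h3⟩
        · rintro ⟨h1, h2⟩; exact ⟨h1, lt_trans hτ.1 h1, h2⟩
      rw [hset2, ← intervalIntegral.integral_of_le hτ.2.le]
      rw [intervalIntegral.integral_congr
        (g := fun s => g τ * ((t - s) ^ (α - 1) * (s - τ) ^ (-α)))
        (fun s _ => by ring)]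
      rw [intervalIntegral.integral_const_mul, kernel_integral hα0 hα1 hτ.2]
    rw [h1, MeasureTheory.integral_mul_const, ← intervalIntegral.integral_of_le ht.le,
      hftc]
  have hΓα := Real.Gamma_pos_of_pos hα0
  have hΓα' := Real.Gamma_pos_of_pos hα1'
  have hstep1 : (∫ s in (0:ℝ)..t, (t - s) ^ (α - 1) *
        ((1 / Real.Gamma (1 - α)) * ∫ τ in (0:ℝ)..s, f' τ * (s - τ) ^ (-α)))
      = (1 / Real.Gamma (1 - α)) *
        ∫ s in (0:ℝ)..t, (t - s) ^ (α - 1) * ∫ τ in (0:ℝ)..s, g τ * (s - τ) ^ (-α) := by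
    rw [← intervalIntegral.integral_const_mul]
    apply intervalIntegral.integral_congr
    intro s hs
    rw [Set.uIcc_of_le ht.le] at hs
    dsimp only
    have hinner : (∫ τ in (0:ℝ)..s, f' τ * (s - τ) ^ (-α))
        = ∫ τ in (0:ℝ)..s, g τ * (s - τ) ^ (-α) := by
      apply intervalIntegral.integral_congr
      intro τ hτ
      rw [Set.uIcc_of_le hs.1] at hτ
      dsimp only
      rw [hgf τ hτ.1]
    rw [hinner]; ring
  rw [hstep1, hLHS, hswap', hRHS]
  field_simp
end

section
/- Let 0 < α < 1, let s > 0, and let f : ℝ → ℝ be continuously differentiable on [0,∞) such that τ ↦ e^{−sτ} |f′(τ)| is integrable on (0,∞). Then t ↦ e^{−st} f(t) is integrable on (0,∞); denote F(s) = ∫_0^∞ e^{−st} f(t) dt. Moreover the Laplace transform of the Caputo fractional derivative of order α of f satisfies ∫_0^∞ e^{−s t} [ (1/Γ(1−α)) ∫_0^t f′(τ) (t−τ)^{−α} dτ ] dt = s^α F(s) − s^{α−1} f(0). -/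
open MeasureTheory intervalIntegral

lemma caputo_aux_k_integrable (α s : ℝ) (hα0 : 0 < α) (hα1 : α < 1) (hs : 0 < s) :
    IntegrableOn (fun u : ℝ => Real.exp (-s * u) * u ^ (-α)) (Set.Ioi 0) := by
  have hmeas : ContinuousOn (fun u : ℝ => Real.exp (-s * u) * u ^ (-α)) (Set.Ioi 0) := by
    apply ((Real.continuous_exp.comp (continuous_const.mul continuous_id)).continuousOn).mul
    exact fun x hx => (Real.continuousAt_rpow_const x (-α) (Or.inl (ne_of_gt hx))).continuousWithinAt
  have h1 : IntegrableOn (fun u : ℝ => Real.exp (-s * u) * u ^ (-α)) (Set.Ioc 0 1) := by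
    have hb : IntegrableOn (fun u : ℝ => u ^ (-α)) (Set.Ioc 0 1) := by
      rw [← intervalIntegrable_iff_integrableOn_Ioc_of_le zero_le_one]
      exact intervalIntegral.intervalIntegrable_rpow' (by linarith)
    refine Integrable.mono' hb ((hmeas.mono Set.Ioc_subset_Ioi_self).aestronglyMeasurable
      measurableSet_Ioc) ?_
    filter_upwards [ae_restrict_mem measurableSet_Ioc] with x hx
    rw [Real.norm_eq_abs, abs_mul, abs_of_pos (Real.exp_pos _),
      abs_of_pos (Real.rpow_pos_of_pos hx.1 _)]
    nlinarith [Real.exp_le_one_iff.2 (by nlinarith [hx.1.le] : -s * x ≤ 0),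
      Real.rpow_pos_of_pos hx.1 (-α)]
  have h2 : IntegrableOn (fun u : ℝ => Real.exp (-s * u) * u ^ (-α)) (Set.Ioi 1) := by
    refine Integrable.mono' (exp_neg_integrableOn_Ioi 1 hs)
      ((hmeas.mono (Set.Ioi_subset_Ioi zero_le_one)).aestronglyMeasurable measurableSet_Ioi) ?_
    filter_upwards [ae_restrict_mem measurableSet_Ioi] with x hx
    rw [Set.mem_Ioi] at hx
    rw [Real.norm_eq_abs, abs_mul, abs_of_pos (Real.exp_pos _),
      abs_of_pos (Real.rpow_pos_of_pos (by linarith) _)]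
    nlinarith [Real.rpow_le_one_of_one_le_of_nonpos (le_of_lt hx) (by linarith : -α ≤ 0),
      Real.exp_pos (-s * x)]
  have h := h1.union h2
  rwa [Set.Ioc_union_Ioi_eq_Ioi zero_le_one] at h

/-- Laplace transform of the Caputo fractional derivative: for `0 < α < 1`, `s > 0` and
`f` continuously differentiable on `[0,∞)` with `τ ↦ e^(-sτ)|f'(τ)|` integrable on
`(0,∞)`, the function `t ↦ e^(-st) f(t)` is integrable on `(0,∞)` and, with
`F(s) = ∫_0^∞ e^(-st) f(t) dt`,
`∫_0^∞ e^(-st) [(1/Γ(1-α)) ∫_0^t f'(τ)(t-τ)^(-α) dτ] dt = s^α F(s) - s^(α-1) f(0)`. -/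
theorem laplace_transform_caputo (α s : ℝ) (hα0 : 0 < α) (hα1 : α < 1) (hs : 0 < s)
    (f f' : ℝ → ℝ)
    (hderiv : ∀ x ∈ Set.Ici (0 : ℝ), HasDerivWithinAt f (f' x) (Set.Ici 0) x)
    (hcont : ContinuousOn f' (Set.Ici 0))
    (hint : IntegrableOn (fun τ : ℝ => Real.exp (-s * τ) * |f' τ|) (Set.Ioi 0)) :
    IntegrableOn (fun t : ℝ => Real.exp (-s * t) * f t) (Set.Ioi 0) ∧
    ∫ t in Set.Ioi (0 : ℝ),
        Real.exp (-s * t) *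
          ((1 / Real.Gamma (1 - α)) * ∫ τ in (0 : ℝ)..t, f' τ * (t - τ) ^ (-α)) =
      s ^ α * (∫ t in Set.Ioi (0 : ℝ), Real.exp (-s * t) * f t) - s ^ (α - 1) * f 0 := by
  have hΓ : 0 < Real.Gamma (1 - α) := Real.Gamma_pos_of_pos (by linarith)
  set L : ℝ →L[ℝ] ℝ →L[ℝ] ℝ := ContinuousLinearMap.mul ℝ ℝ with hLdef
  set g : ℝ → ℝ := fun τ => Real.exp (-s * τ) * f' τ with hgdef
  have hgmeas : AEStronglyMeasurable g (volume.restrict (Set.Ioi 0)) := by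
    refine ContinuousOn.aestronglyMeasurable ?_ measurableSet_Ioi
    exact ((Real.continuous_exp.comp (continuous_const.mul continuous_id)).continuousOn).mul
      (hcont.mono Set.Ioi_subset_Ici_self)
  have hg : IntegrableOn g (Set.Ioi 0) := by
    refine Integrable.mono' hint hgmeas ?_
    filter_upwards with x
    rw [hgdef, Real.norm_eq_abs, abs_mul, abs_of_pos (Real.exp_pos _)]
  have hk : IntegrableOn (fun u : ℝ => Real.exp (-s * u) * u ^ (-α)) (Set.Ioi 0) :=
    caputo_aux_k_integrable α s hα0 hα1 hs
  have hk1 : IntegrableOn (fun u : ℝ => Real.exp (-s * u)) (Set.Ioi 0) :=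
    exp_neg_integrableOn_Ioi 0 hs
  -- fundamental theorem of calculus
  have hFTC : ∀ t : ℝ, 0 ≤ t → ∫ τ in (0:ℝ)..t, f' τ = f t - f 0 := by
    intro t ht
    refine intervalIntegral.integral_eq_sub_of_hasDeriv_right_of_le ht ?_ ?_ ?_
    · exact fun x hx => ((hderiv x hx.1).continuousWithinAt).mono (fun y hy => hy.1)
    · intro x hx
      exact (((hderiv x hx.1.le).hasDerivAt (Ici_mem_nhds hx.1)).hasDerivWithinAt)
    · refine (hcont.mono ?_).intervalIntegrable
      rw [Set.uIcc_of_le ht]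
      exact fun y hy => hy.1
  -- value of the exponential integral
  have hexp_int : ∫ t in Set.Ioi (0:ℝ), Real.exp (-s * t) = 1 / s := by
    have h := Real.integral_rpow_mul_exp_neg_mul_Ioi zero_lt_one hs
    simp only [sub_self, Real.rpow_zero, one_mul, Real.rpow_one, Real.Gamma_one, mul_one] at h
    rw [← h]
    congr 1
    funext t
    rw [neg_mul]
  -- value of the kernel integral
  have hkval : ∫ u in Set.Ioi (0:ℝ), Real.exp (-s * u) * u ^ (-α)
      = s ^ (α - 1) * Real.Gamma (1 - α) := by
    have h := Real.integral_rpow_mul_exp_neg_mul_Ioi (show (0:ℝ) < 1 - α by linarith) hs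
    rw [show ((1:ℝ)/s) ^ (1-α) = s ^ (α-1) by
      rw [one_div, ← Real.rpow_neg_one s, ← Real.rpow_mul hs.le]
      congr 1
      ring] at h
    rw [← h]
    congr 1
    funext t
    rw [show (1 - α - 1 : ℝ) = -α by ring, neg_mul]
    ring
  -- pointwise identity for the Laplace transform of f
  have hptF : Set.EqOn (fun t : ℝ => Real.exp (-s * t) * f t)
      (fun t : ℝ => f 0 * Real.exp (-s * t)
        + ∫ τ in (0:ℝ)..t, g τ * Real.exp (-s * (t - τ))) (Set.Ioi 0) := by
    intro t ht
    rw [Set.mem_Ioi] at ht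
    have h1 : ∀ τ : ℝ, g τ * Real.exp (-s * (t - τ)) = Real.exp (-s * t) * f' τ := by
      intro τ
      have h2 : Real.exp (-s * τ) * Real.exp (-s * (t - τ)) = Real.exp (-s * t) := by
        rw [← Real.exp_add]; congr 1; ring
      rw [hgdef]
      simp only
      rw [← h2]
      ring
    simp only
    rw [intervalIntegral.integral_congr (fun τ _ => h1 τ), intervalIntegral.integral_const_mul,
      hFTC t ht.le]
    ring
  -- integrability of the convolution with exp
  have hconv1 : IntegrableOn
      (fun t : ℝ => ∫ τ in (0:ℝ)..t, g τ * Real.exp (-s * (t - τ))) (Set.Ioi 0) := by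
    refine ((integrable_posConvolution hg hk1 L).integrableOn).congr_fun ?_ measurableSet_Ioi
    intro t ht
    simp [posConvolution, Set.indicator_of_mem ht, hLdef, ContinuousLinearMap.mul_apply']
  have hF : IntegrableOn (fun t : ℝ => Real.exp (-s * t) * f t) (Set.Ioi 0) := by
    exact IntegrableOn.congr_fun ((hk1.const_mul (f 0)).add hconv1)
      (fun t ht => (hptF ht).symm) measurableSet_Ioi
  refine ⟨hF, ?_⟩
  set F : ℝ := ∫ t in Set.Ioi (0:ℝ), Real.exp (-s * t) * f t with hFdef
  set G : ℝ := ∫ τ in Set.Ioi (0:ℝ), g τ with hGdef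
  -- Laplace transform of the convolution with exp
  have hconvval : ∫ t in Set.Ioi (0:ℝ), ∫ τ in (0:ℝ)..t, g τ * Real.exp (-s * (t - τ))
      = G * (1 / s) := by
    have h := integral_posConvolution hg hk1 L
    simp only [hLdef, ContinuousLinearMap.mul_apply'] at h
    rw [h, hexp_int]
  -- the equation for F
  have hFeq : F = f 0 * (1 / s) + G * (1 / s) := by
    rw [hFdef, setIntegral_congr_fun measurableSet_Ioi hptF,
      integral_add (hk1.const_mul (f 0)) hconv1, MeasureTheory.integral_const_mul, hexp_int, hconvval]
  -- pointwise identity for the Caputo transform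
  have hptC : Set.EqOn (fun t : ℝ => Real.exp (-s * t) *
        ((1 / Real.Gamma (1 - α)) * ∫ τ in (0 : ℝ)..t, f' τ * (t - τ) ^ (-α)))
      (fun t : ℝ => (1 / Real.Gamma (1 - α)) *
        ∫ τ in (0:ℝ)..t, g τ * (Real.exp (-s * (t - τ)) * (t - τ) ^ (-α))) (Set.Ioi 0) := by
    intro t ht
    simp only
    rw [← mul_assoc, mul_comm (Real.exp (-s * t)), mul_assoc, ← intervalIntegral.integral_const_mul]
    congr 1
    refine intervalIntegral.integral_congr fun τ _ => ?_
    have h2 : Real.exp (-s * τ) * Real.exp (-s * (t - τ)) = Real.exp (-s * t) := by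
      rw [← Real.exp_add]; congr 1; ring
    rw [hgdef]
    simp only
    rw [← h2]
    ring
  have hCval : ∫ t in Set.Ioi (0:ℝ), ∫ τ in (0:ℝ)..t, g τ *
      (Real.exp (-s * (t - τ)) * (t - τ) ^ (-α)) = G * (s ^ (α-1) * Real.Gamma (1-α)) := by
    have h := integral_posConvolution hg hk L
    simp only [hLdef, ContinuousLinearMap.mul_apply'] at h
    rw [h, hkval]
  rw [setIntegral_congr_fun measurableSet_Ioi hptC, MeasureTheory.integral_const_mul, hCval, hFeq]
  have hsα : s ^ (α - 1) * s = s ^ α := by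
    rw [← Real.rpow_add_one (ne_of_gt hs) (α - 1)]
    norm_num
  field_simp
  linear_combination (G + f 0) * hsα
end

section
/- Fix s > 0 and C > 0. For each R > 0 let z*(R) = (R + √(R² + 4R/(sC)))/2 be the unique positive fixed point of the domino-ladder impedance map F(z) = R + 1/(sC + 1/z). Then z*(R) / ( √(R/C) · s^{−1/2} ) → 1 as R → 0⁺. That is, in the continuum limit of vanishing section resistance, the infinite RC domino ladder has impedance asymptotic to √(R/C) · s^{−1/2}, i.e., it is a half-order integrator. -/
open Filter

/-- Continuum limit of the infinite RC domino ladder: for fixed `s > 0`, `C > 0`, the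
unique positive fixed point `z*(R) = (R + √(R² + 4R/(sC)))/2` of the impedance map
`F(z) = R + 1/(sC + 1/z)` satisfies `z*(R) / (√(R/C) s^(-1/2)) → 1` as `R → 0⁺`:
the ladder is asymptotically a half-order integrator. -/
theorem domino_ladder_half_order_limit (s C : ℝ) (hs : 0 < s) (hC : 0 < C) :
    Tendsto
      (fun R : ℝ =>
        ((R + Real.sqrt (R ^ 2 + 4 * R / (s * C))) / 2) /
          (Real.sqrt (R / C) * s ^ (-(1 / 2 : ℝ))))
      (nhdsWithin 0 (Set.Ioi 0)) (nhds 1) := by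
  have h1 : Tendsto (fun R : ℝ => (Real.sqrt (R * s * C) + Real.sqrt (R * s * C + 4)) / 2)
      (nhdsWithin 0 (Set.Ioi 0)) (nhds 1) := by
    have hcont : ContinuousAt
        (fun R : ℝ => (Real.sqrt (R * s * C) + Real.sqrt (R * s * C + 4)) / 2) 0 := by
      fun_prop
    have := hcont.continuousWithinAt (s := Set.Ioi 0)
    have h0 : (Real.sqrt (0 * s * C) + Real.sqrt (0 * s * C + 4)) / 2 = 1 := by
      rw [show (0 : ℝ) * s * C = 0 by ring, Real.sqrt_zero, zero_add,
        show (0 : ℝ) + 4 = 2 ^ 2 by norm_num, Real.sqrt_sq (by norm_num)]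
      norm_num
    unfold ContinuousWithinAt at this
    simp only [h0] at this
    exact this
  refine h1.congr' ?_
  filter_upwards [self_mem_nhdsWithin] with R hR
  have hRpos : (0 : ℝ) < R := hR
  have ha : (0 : ℝ) < Real.sqrt R := Real.sqrt_pos.mpr hRpos
  have hb : (0 : ℝ) < Real.sqrt s := Real.sqrt_pos.mpr hs
  have hc : (0 : ℝ) < Real.sqrt C := Real.sqrt_pos.mpr hC
  have hsr : s ^ (-(1 / 2 : ℝ)) = (Real.sqrt s)⁻¹ := by
    rw [Real.rpow_neg hs.le, Real.sqrt_eq_rpow]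
  have h4 : R ^ 2 + 4 * R / (s * C) = R * (R * s * C + 4) / (s * C) := by
    field_simp
  have h5 : Real.sqrt (R * (R * s * C + 4) / (s * C))
      = Real.sqrt R * Real.sqrt (R * s * C + 4) / (Real.sqrt s * Real.sqrt C) := by
    rw [Real.sqrt_div (by positivity), Real.sqrt_mul hRpos.le, Real.sqrt_mul hs.le]
  have h6 : Real.sqrt (R / C) = Real.sqrt R / Real.sqrt C := Real.sqrt_div hRpos.le C
  have h7 : Real.sqrt (R * s * C) = Real.sqrt R * Real.sqrt s * Real.sqrt C := by
    rw [Real.sqrt_mul (by positivity), Real.sqrt_mul hRpos.le]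
  have hR2 : Real.sqrt R * Real.sqrt R = R := Real.mul_self_sqrt hRpos.le
  rw [h4, h5, h6, h7, hsr]
  rw [eq_comm]
  field_simp
  linear_combination (-(Real.sqrt s * Real.sqrt C)) * hR2
end

section
/- Fix s > 0 and K > 0. For each R > 0 let z*(R) = (R + √(R² + 4RK s^{−1/2}))/2 be the unique positive fixed point of the nested-ladder impedance map F(z) = R + 1/(s^{1/2}/K + 1/z), obtained from the domino ladder by replacing each shunt capacitor with a half-order element of impedance K · s^{−1/2}. Then z*(R) / ( √(RK) · s^{−1/4} ) → 1 as R → 0⁺. That is, in the continuum limit the nested ladder has impedance asymptotic to √(RK) · s^{−1/4}, i.e., it is a quarter-order integrator. -/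
open Filter

/-- Continuum limit of the nested ladder: for fixed `s > 0`, `K > 0`, the unique positive
fixed point `z*(R) = (R + √(R² + 4RK s^(-1/2)))/2` of the nested-ladder impedance map
`F(z) = R + 1/(s^(1/2)/K + 1/z)` satisfies `z*(R)/(√(RK) s^(-1/4)) → 1` as `R → 0⁺`:
the nested ladder is asymptotically a quarter-order integrator. -/
theorem nested_ladder_quarter_order_limit (s K : ℝ) (hs : 0 < s) (hK : 0 < K) :
    Tendsto
      (fun R : ℝ =>
        ((R + Real.sqrt (R ^ 2 + 4 * R * K * s ^ (-(1 / 2 : ℝ)))) / 2) /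
          (Real.sqrt (R * K) * s ^ (-(1 / 4 : ℝ))))
      (nhdsWithin 0 (Set.Ioi 0)) (nhds 1) := by
  set c : ℝ := s ^ (-(1 / 2 : ℝ)) with hc
  set d : ℝ := s ^ (-(1 / 4 : ℝ)) with hd
  have hcpos : 0 < c := Real.rpow_pos_of_pos hs _
  have hdpos : 0 < d := Real.rpow_pos_of_pos hs _
  have hdd : d * d = c := by
    rw [hc, hd, ← Real.rpow_add hs]; norm_num
  -- the simplified function
  set g : ℝ → ℝ := fun R => (Real.sqrt R + Real.sqrt (R + 4 * K * c)) / (2 * Real.sqrt K * d)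
    with hg
  have hKs : (0:ℝ) < Real.sqrt K := Real.sqrt_pos.mpr hK
  have hglim : Tendsto g (nhdsWithin 0 (Set.Ioi 0)) (nhds 1) := by
    have hcont : ContinuousAt g 0 := by
      apply ContinuousAt.div
      · exact ((Real.continuous_sqrt.continuousAt).add
          ((Real.continuous_sqrt.comp (continuous_id.add continuous_const)).continuousAt))
      · exact continuousAt_const
      · positivity
    have hval : g 0 = 1 := by
      have h4 : Real.sqrt (4 * K * c) = 2 * Real.sqrt K * d := by
        rw [show 4 * K * c = (2 * Real.sqrt K * d)^2 by
          rw [mul_pow, mul_pow, Real.sq_sqrt hK.le, sq, sq, hdd]; ring]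
        exact Real.sqrt_sq (by positivity)
      simp only [hg, Real.sqrt_zero, h4, zero_add]
      exact div_self (ne_of_gt (by positivity : (0:ℝ) < 2 * Real.sqrt K * d))
    have := hcont.continuousWithinAt (s := Set.Ioi 0)
    rw [ContinuousWithinAt, hval] at this
    exact this
  refine hglim.congr' ?_
  filter_upwards [self_mem_nhdsWithin] with R hR
  have hRpos : (0:ℝ) < R := hR
  have hRs : (0:ℝ) < Real.sqrt R := Real.sqrt_pos.mpr hRpos
  have h1 : Real.sqrt (R ^ 2 + 4 * R * K * c) = Real.sqrt R * Real.sqrt (R + 4 * K * c) := by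
    rw [← Real.sqrt_mul hRpos.le]
    ring_nf
  have h2 : Real.sqrt (R * K) = Real.sqrt R * Real.sqrt K := Real.sqrt_mul hRpos.le K
  rw [hg]
  rw [h1, h2, show R = Real.sqrt R * Real.sqrt R from (Real.mul_self_sqrt hRpos.le).symm]
  field_simp
  have hx : Real.sqrt R * Real.sqrt R = R := Real.mul_self_sqrt hRpos.le
  rw [Real.sqrt_sq hRs.le]
  ring
end
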